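/- The map f_0 : (W_{d,r} × D^k, V_{d,r} × S^{k-1}) → (W_{d+k,r}, V_{d+k,r}) defined via an orthogonal Clifford multiplication, (v_0,...,v_{r-1}, x) ↦ (√(1-|x|²)v_0 + e_0x, ..., √(1-|x|²)v_{r-1} + e_{r-1}x), is well-defined: if (v_0,...,v_{r-1}) is an orthonormal r-frame in ℝ^d and |x| = 1 with x ∈ ℝ^k, then the image is an orthonormal r-frame in ℝ^{d+k} = ℝ^d ⊕ ℝ^k. -/

import Mathlib

/-- The periodicity map
`f₀ : (W_{d,r} × D^k, V_{d,r} × S^{k-1}) → (W_{d+k,r}, V_{d+k,r})`,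
`(v_0, …, v_{r-1}, x) ↦ (√(1-|x|²)v_0 + e_0x, …, √(1-|x|²)v_{r-1} + e_{r-1}x)`, defined via an
orthogonal Clifford multiplication `ℝ^r × ℝ^k → ℝ^k`, is well-defined: if `(v_0, …, v_{r-1})`
is an orthonormal `r`-frame in `ℝ^d` and `x ∈ ℝ^k` with `|x| ≤ 1`, then the image is an
orthonormal `r`-frame in `ℝ^{d+k} = ℝ^d ⊕ ℝ^k`. -/
theorem periodicity_map_well_defined
    {r d k : ℕ} (hr : 0 < r)
    (μ : (Fin r → ℝ) →ₗ[ℝ] EuclideanSpace ℝ (Fin k) →ₗ[ℝ] EuclideanSpace ℝ (Fin k))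
    (h0 : ∀ y, μ (Pi.single (⟨0, hr⟩ : Fin r) 1) y = y)
    (horth : ∀ (i j : Fin r) (y : EuclideanSpace ℝ (Fin k)),
      inner ℝ (μ (Pi.single i 1) y) (μ (Pi.single j 1) y)
        = if i = j then (inner ℝ y y : ℝ) else 0)
    (v : Fin r → EuclideanSpace ℝ (Fin d)) (hv : Orthonormal ℝ v)
    (x : EuclideanSpace ℝ (Fin k)) (hx : ‖x‖ ≤ 1) :
    Orthonormal ℝ (fun i : Fin r =>
      (WithLp.equiv 2 (EuclideanSpace ℝ (Fin d) × EuclideanSpace ℝ (Fin k))).symm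
        (Real.sqrt (1 - ‖x‖ ^ 2) • v i, μ (Pi.single i 1) x)) := by
  rw [orthonormal_iff_ite]
  intro i j
  rw [orthonormal_iff_ite] at hv
  have hnn : (0:ℝ) ≤ 1 - ‖x‖ ^ 2 := by
    have : ‖x‖ ^ 2 ≤ 1 := by nlinarith [norm_nonneg x]
    linarith
  have hsq : Real.sqrt (1 - ‖x‖ ^ 2) * Real.sqrt (1 - ‖x‖ ^ 2) = 1 - ‖x‖ ^ 2 :=
    Real.mul_self_sqrt hnn
  have hinner : (inner ℝ
      ((WithLp.equiv 2 (EuclideanSpace ℝ (Fin d) × EuclideanSpace ℝ (Fin k))).symm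
        (Real.sqrt (1 - ‖x‖ ^ 2) • v i, μ (Pi.single i 1) x))
      ((WithLp.equiv 2 (EuclideanSpace ℝ (Fin d) × EuclideanSpace ℝ (Fin k))).symm
        (Real.sqrt (1 - ‖x‖ ^ 2) • v j, μ (Pi.single j 1) x)) : ℝ)
      = inner ℝ (Real.sqrt (1 - ‖x‖ ^ 2) • v i) (Real.sqrt (1 - ‖x‖ ^ 2) • v j)
        + inner ℝ (μ (Pi.single i 1) x) (μ (Pi.single j 1) x) := rfl
  rw [hinner, horth, real_inner_smul_left, real_inner_smul_right, hv,
    real_inner_self_eq_norm_sq]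
  by_cases h : i = j <;> simp [h, hsq] <;> ring
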